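/- arXiv:1402.2995 — 4 statements merged into one kernel-verified Lean document; each statement's English description precedes it below -/
import Mathlib

section
/- Let G be a graph with n vertices, e edges, maximum degree Δ and minimum degree δ. Then for any vertex v, d(v) + m(v) ≤ 2e/(n-1) + Δ(n-2)/(n-1) + (Δ-δ)(1 - Δ/(n-1)), where m(v) is the average degree of the neighbors of v. -/
open Matrix Polynomial Finset

noncomputable def signlessLap {V : Type*} [Fintype V] [DecidableEq V] (G : SimpleGraph V) :
    Matrix V V ℝ := by
  classical exact G.degMatrix ℝ + G.adjMatrix ℝ

noncomputable def lap {V : Type*} [Fintype V] [DecidableEq V] (G : SimpleGraph V) :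
    Matrix V V ℝ := by
  classical exact G.lapMatrix ℝ

/-- The `i`-th largest eigenvalue (1-indexed) of a real symmetric matrix. -/
noncomputable def eig {V : Type*} [Fintype V] [DecidableEq V] (M : Matrix V V ℝ) (i : ℕ) : ℝ :=
  (if h : M.IsHermitian then (Finset.univ.val.map h.eigenvalues).sort (· ≥ ·) else []).getD (i - 1) 0

/-- `G` is a star `K_{1,n-1}`: some center adjacent exactly to all other vertices. -/
def IsStar {V : Type*} (G : SimpleGraph V) : Prop :=
  ∃ c : V, ∀ u v, G.Adj u v ↔ (u ≠ v ∧ (u = c ∨ v = c))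

lemma key_real (s d D N M e2 : ℝ) (h1 : 0 ≤ s) (h2 : s ≤ d) (h3 : d ≤ D) (h4 : D ≤ N)
    (h5 : 1 ≤ d) (h6 : D - s ≤ N - 1) (h7 : 0 ≤ M) (h8 : M ≤ d * D)
    (h9 : d + M + (N - d) * s ≤ e2) :
    d + M / d ≤ e2 / N + (N - 1) / N * D + (D - s) * (1 - D / N) := by
  have hd : (0:ℝ) < d := by linarith
  have hN : (0:ℝ) < N := by linarith
  rw [← sub_nonneg]
  have expand : e2 / N + (N - 1) / N * D + (D - s) * (1 - D / N) - (d + M / d)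
      = (e2 * d + (N - 1) * D * d + (D - s) * (N - D) * d - d * d * N - M * N) / (N * d) := by
    field_simp
    ring
  rw [expand]
  apply div_nonneg _ (by positivity)
  rcases le_total e2 (N * d + D - (D - s) * (N - D)) with hc | hc
  · have hA : 0 ≤ N * (e2 - (d + M + (N - d) * s)) := mul_nonneg hN.le (by linarith)
    have hB : 0 ≤ (N - d) * ((N * d + D - (D - s) * (N - D)) - e2) :=
      mul_nonneg (by linarith) (by linarith)
    have hC : 0 ≤ N * ((D - d) * (N - 1 + s - D)) :=
      mul_nonneg hN.le (mul_nonneg (by linarith) (by linarith))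
    nlinarith [hA, hB, hC]
  · have hA : 0 ≤ d * (e2 - (N * d + D - (D - s) * (N - D))) :=
      mul_nonneg hd.le (by linarith)
    have hB : 0 ≤ N * (d * D - M) := mul_nonneg hN.le (by linarith)
    nlinarith [hA, hB]


theorem stmt6 (n : ℕ) (hn : 2 ≤ n) (G : SimpleGraph (Fin n)) [DecidableRel G.Adj]
    (v : Fin n) (hv : 0 < G.degree v) :
    (G.degree v : ℝ) + (∑ u ∈ G.neighborFinset v, (G.degree u : ℝ)) / G.degree v ≤
      2 * G.edgeFinset.card / ((n : ℝ) - 1) + ((n : ℝ) - 2) / ((n : ℝ) - 1) * G.maxDegree +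
        ((G.maxDegree : ℝ) - G.minDegree) * (1 - (G.maxDegree : ℝ) / ((n : ℝ) - 1)) := by
  classical
  have : Nonempty (Fin n) := ⟨⟨0, by omega⟩⟩
  have hdlt : G.degree v ≤ n - 1 := by
    have := G.degree_lt_card_verts v
    simp only [Fintype.card_fin] at this
    omega
  have hΔle : G.maxDegree ≤ n - 1 := by
    obtain ⟨u, hu⟩ := G.exists_maximal_degree_vertex
    have := G.degree_lt_card_verts u
    simp only [Fintype.card_fin] at this
    omega
  -- gap fact : Δ + 1 ≤ (n - 1) + δ
  have hgap : G.maxDegree + 1 ≤ (n - 1) + G.minDegree := by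
    rcases Nat.eq_zero_or_pos G.minDegree with h0 | h1
    · -- there is an isolated vertex w; hence Δ ≤ n - 2
      obtain ⟨w, hw⟩ := G.exists_minimal_degree_vertex
      obtain ⟨u, hu⟩ := G.exists_maximal_degree_vertex
      have hwdeg : G.degree w = 0 := by omega
      have hΔpos : 0 < G.maxDegree := lt_of_lt_of_le hv (G.degree_le_maxDegree v)
      have huw : u ≠ w := by
        intro h; rw [h, hwdeg] at hu; omega
      have hsub : G.neighborFinset u ⊆ univ \ {u, w} := by
        intro x hx
        rw [SimpleGraph.mem_neighborFinset] at hx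
        simp only [mem_sdiff, mem_univ, true_and, mem_insert, mem_singleton]
        push_neg
        constructor
        · rintro rfl; exact G.irrefl hx
        · rintro rfl
          have : u ∈ G.neighborFinset x := by rw [SimpleGraph.mem_neighborFinset]; exact hx.symm
          rw [← G.card_neighborFinset_eq_degree] at hwdeg
          rw [Finset.card_eq_zero.mp hwdeg] at this
          exact absurd this (Finset.notMem_empty u)
      have hcard : (univ \ ({u, w} : Finset (Fin n))).card = n - 2 := by
        rw [Finset.card_sdiff_of_subset (subset_univ _)]
        rw [Finset.card_insert_of_notMem (by simpa using huw), Finset.card_singleton]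
        simp [Fintype.card_fin]
      have : G.degree u ≤ n - 2 := by
        rw [← G.card_neighborFinset_eq_degree, ← hcard]
        exact Finset.card_le_card hsub
      omega
    · omega
  -- degree sum split
  set R : Finset (Fin n) := univ \ insert v (G.neighborFinset v) with hR
  have hsplit : G.degree v + (∑ u ∈ G.neighborFinset v, G.degree u) + ∑ u ∈ R, G.degree u
      = 2 * G.edgeFinset.card := by
    rw [← G.sum_degrees_eq_twice_card_edges,
      ← Finset.sum_sdiff (Finset.subset_univ (insert v (G.neighborFinset v))),
      Finset.sum_insert (G.notMem_neighborFinset_self v)]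
    push_cast
    ring
  have hRcard : R.card = n - 1 - G.degree v := by
    rw [hR, Finset.card_sdiff_of_subset (subset_univ _),
      Finset.card_insert_of_notMem (G.notMem_neighborFinset_self v),
      G.card_neighborFinset_eq_degree]
    simp only [Finset.card_univ, Fintype.card_fin]
    omega
  have hrest : (n - 1 - G.degree v) * G.minDegree ≤ ∑ u ∈ R, G.degree u := by
    rw [← hRcard]
    have := Finset.card_nsmul_le_sum R (fun u => G.degree u) G.minDegree
      (fun u _ => G.minDegree_le_degree u)
    simpa [smul_eq_mul] using this
  have h9n : G.degree v + (∑ u ∈ G.neighborFinset v, G.degree u)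
      + (n - 1 - G.degree v) * G.minDegree ≤ 2 * G.edgeFinset.card := by
    linarith
  have h8n : (∑ u ∈ G.neighborFinset v, G.degree u) ≤ G.degree v * G.maxDegree := by
    have := Finset.sum_le_card_nsmul (G.neighborFinset v) (fun u => G.degree u) G.maxDegree
      (fun u _ => G.degree_le_maxDegree u)
    simpa [smul_eq_mul, G.card_neighborFinset_eq_degree] using this
  -- cast facts to ℝ
  have hn2 : (2:ℝ) ≤ (n:ℝ) := by exact_mod_cast hn
  have key := key_real (G.minDegree : ℝ) (G.degree v : ℝ) (G.maxDegree : ℝ) ((n:ℝ) - 1)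
    (∑ u ∈ G.neighborFinset v, (G.degree u : ℝ)) (2 * G.edgeFinset.card)
    (by positivity)
    (by exact_mod_cast G.minDegree_le_degree v)
    (by exact_mod_cast G.degree_le_maxDegree v)
    (by
      have : ((G.maxDegree : ℝ)) ≤ ((n - 1 : ℕ) : ℝ) := by exact_mod_cast hΔle
      have h1n : ((n - 1 : ℕ) : ℝ) = (n:ℝ) - 1 := by
        have : (1:ℕ) ≤ n := by omega
        push_cast [Nat.cast_sub this]
        ring
      linarith)
    (by exact_mod_cast hv)
    (by
      have hc : ((G.maxDegree : ℝ)) + 1 ≤ ((n - 1 : ℕ) : ℝ) + G.minDegree := by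
        exact_mod_cast hgap
      have h1n : ((n - 1 : ℕ) : ℝ) = (n:ℝ) - 1 := by
        have : (1:ℕ) ≤ n := by omega
        push_cast [Nat.cast_sub this]
        ring
      rw [h1n] at hc
      linarith)
    (by positivity)
    (by
      have := h8n
      push_cast
      exact_mod_cast this)
    (by
      have hcast : (((n - 1 - G.degree v : ℕ)) : ℝ) = (n:ℝ) - 1 - G.degree v := by
        have h1 : G.degree v + 1 ≤ n := by omega
        push_cast [Nat.cast_sub (show G.degree v ≤ n - 1 from hdlt),
          Nat.cast_sub (show (1:ℕ) ≤ n by omega)]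
        ring
      have := h9n
      have hr : ((G.degree v : ℝ)) + (∑ u ∈ G.neighborFinset v, (G.degree u : ℝ))
          + (((n - 1 - G.degree v : ℕ)) : ℝ) * G.minDegree ≤ 2 * G.edgeFinset.card := by
        exact_mod_cast this
      rw [hcast] at hr
      linarith)
  have hform : ((n:ℝ) - 2) = ((n:ℝ) - 1) - 1 := by ring
  rw [hform]
  exact key
end

section
/- For any simple graph G, the largest signless Laplacian eigenvalue satisfies q_1(G) ≤ max over vertices v of (d(v) + m(v)), where m(v) is the average degree of the neighbors of v. -/
set_option maxHeartbeats 1000000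

open Matrix Polynomial Finset

/-- Row-sum bound for eigenvalues of a nonnegative matrix, weighted by a positive vector,
assuming the eigenvector has a positive entry. -/
lemma rowsum_bound_pos {V : Type*} [Fintype V] [DecidableEq V] [Nonempty V]
    (M : Matrix V V ℝ) (hM : ∀ i j, 0 ≤ M i j) (s : V → ℝ) (hs : ∀ v, 0 < s v)
    (μ : ℝ) (x : V → ℝ) (hx : ∃ w, 0 < x w) (heig : M *ᵥ x = μ • x) :
    μ ≤ Finset.univ.sup' Finset.univ_nonempty (fun v => (M *ᵥ s) v / s v) := by
  obtain ⟨v, -, hv⟩ := Finset.exists_mem_eq_sup' Finset.univ_nonempty (fun u => x u / s u)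
  have hvmax : ∀ u, x u / s u ≤ x v / s v := by
    intro u; rw [← hv]; exact Finset.le_sup' (fun u => x u / s u) (Finset.mem_univ u)
  obtain ⟨w, hw⟩ := hx
  set t : ℝ := x v / s v with ht
  have hT : 0 < t := lt_of_lt_of_le (div_pos hw (hs w)) (hvmax w)
  have hxv : x v = s v * t := by
    rw [ht, mul_div_assoc', mul_comm, mul_div_assoc, div_self (hs v).ne', mul_one]
  have h1 : μ * x v = ∑ u, M v u * x u := by
    have := congrFun heig v
    simpa [Matrix.mulVec, dotProduct, mul_comm] using this.symm
  have h2 : ∑ u, M v u * x u ≤ (∑ u, M v u * s u) * t := by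
    rw [Finset.sum_mul]
    refine Finset.sum_le_sum fun u _ => ?_
    have hxu : x u ≤ s u * t := by
      have h' : x u * s v ≤ x v * s u := (div_le_div_iff₀ (hs u) (hs v)).mp (hvmax u)
      have h'' : x u ≤ (x v * s u) / s v := (le_div_iff₀ (hs v)).mpr h'
      calc x u ≤ (x v * s u) / s v := h''
        _ = s u * t := by rw [ht]; ring
    calc M v u * x u ≤ M v u * (s u * t) := by
          exact mul_le_mul_of_nonneg_left hxu (hM v u)
      _ = M v u * s u * t := by ring
  have hMs : (M *ᵥ s) v = ∑ u, M v u * s u := by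
    simp [Matrix.mulVec, dotProduct]
  have hkey : μ * (s v * t) ≤ (M *ᵥ s) v * t := by
    rw [← hxv, h1, hMs]; exact h2
  have : μ * s v ≤ (M *ᵥ s) v := by
    have := le_of_mul_le_mul_right (by linarith [hkey] : μ * s v * t ≤ (M *ᵥ s) v * t) hT
    exact this
  have hfin : μ ≤ (M *ᵥ s) v / s v := (le_div_iff₀ (hs v)).mpr (by linarith)
  exact hfin.trans (Finset.le_sup' (fun w => (M *ᵥ s) w / s w) (Finset.mem_univ v))

lemma rowsum_bound {V : Type*} [Fintype V] [DecidableEq V] [Nonempty V]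
    (M : Matrix V V ℝ) (hM : ∀ i j, 0 ≤ M i j) (s : V → ℝ) (hs : ∀ v, 0 < s v)
    (μ : ℝ) (x : V → ℝ) (hx : x ≠ 0) (heig : M *ᵥ x = μ • x) :
    μ ≤ Finset.univ.sup' Finset.univ_nonempty (fun v => (M *ᵥ s) v / s v) := by
  by_cases h : ∃ w, 0 < x w
  · exact rowsum_bound_pos M hM s hs μ x h heig
  · push_neg at h
    obtain ⟨w, hw⟩ : ∃ w, x w ≠ 0 := by
      by_contra hc; push_neg at hc; exact hx (funext hc)
    have hw' : 0 < (-x) w := by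
      have := lt_of_le_of_ne (h w) hw
      simpa using this
    refine rowsum_bound_pos M hM s hs μ (-x) ⟨w, hw'⟩ ?_
    rw [Matrix.mulVec_neg, heig, smul_neg]

theorem stmt7 {V : Type*} [Fintype V] [DecidableEq V] [Nonempty V]
    (G : SimpleGraph V) [DecidableRel G.Adj] :
    eig (signlessLap G) 1 ≤ Finset.univ.sup' Finset.univ_nonempty
      (fun v => if G.degree v = 0 then (0 : ℝ)
        else (G.degree v : ℝ) + (∑ u ∈ G.neighborFinset v, (G.degree u : ℝ)) / G.degree v) := by
  classical
  have hQeq : signlessLap G = G.degMatrix ℝ + G.adjMatrix ℝ := by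
    unfold signlessLap
    congr!
  have hH : (signlessLap G).IsHermitian := by
    rw [Matrix.IsHermitian, Matrix.conjTranspose_eq_transpose_of_trivial, hQeq]
    exact (SimpleGraph.isSymm_degMatrix _ G).add (SimpleGraph.isSymm_adjMatrix _)
  -- eig is an eigenvalue
  obtain ⟨i, hi⟩ : ∃ i : V, eig (signlessLap G) 1 = hH.eigenvalues i := by
    have hlen : 0 < ((Finset.univ.val.map hH.eigenvalues).sort (· ≥ ·)).length := by
      rw [Multiset.length_sort, Multiset.card_map]
      simpa using Fintype.card_pos (α := V)
    have : eig (signlessLap G) 1 =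
        ((Finset.univ.val.map hH.eigenvalues).sort (· ≥ ·)).getD 0 0 := by
      rw [eig, dif_pos hH]
    rw [this, List.getD_eq_getElem _ _ hlen]
    have hmem : ((Finset.univ.val.map hH.eigenvalues).sort (· ≥ ·))[0] ∈
        (Finset.univ.val.map hH.eigenvalues).sort (· ≥ ·) := List.getElem_mem _
    rw [Multiset.mem_sort, Multiset.mem_map] at hmem
    obtain ⟨i, -, hi⟩ := hmem
    exact ⟨i, hi.symm⟩
  set x : V → ℝ := ⇑(hH.eigenvectorBasis i) with hx
  have heig : signlessLap G *ᵥ x = hH.eigenvalues i • x := hH.mulVec_eigenvectorBasis i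
  have hxne : x ≠ 0 := by
    intro h
    have := (hH.eigenvectorBasis).orthonormal.ne_zero i
    apply this
    ext v
    exact congrFun h v
  set s : V → ℝ := fun v => if G.degree v = 0 then 1 else (G.degree v : ℝ) with hs
  have hspos : ∀ v, 0 < s v := by
    intro v
    simp only [hs]
    split_ifs with h
    · norm_num
    · exact_mod_cast Nat.pos_of_ne_zero h
  have hMnn : ∀ u v, 0 ≤ signlessLap G u v := by
    intro u v
    rw [hQeq]
    simp only [Matrix.add_apply, SimpleGraph.degMatrix, Matrix.diagonal_apply,
      SimpleGraph.adjMatrix_apply]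
    split_ifs <;> positivity
  have hb := rowsum_bound (signlessLap G) hMnn s hspos (hH.eigenvalues i) x hxne heig
  rw [hi]
  refine hb.trans (Finset.sup'_le _ _ fun v _ => ?_)
  -- compute the ratio at v
  have hmv : (signlessLap G *ᵥ s) v = (G.degree v : ℝ) * s v +
      ∑ u ∈ G.neighborFinset v, s u := by
    rw [hQeq, Matrix.add_mulVec, Pi.add_apply, SimpleGraph.degMatrix_mulVec_apply,
      SimpleGraph.adjMatrix_mulVec_apply]
  by_cases hdeg : G.degree v = 0
  · have hN : G.neighborFinset v = ∅ := by
      rw [← Finset.card_eq_zero, SimpleGraph.card_neighborFinset_eq_degree, hdeg]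
    have : (signlessLap G *ᵥ s) v = 0 := by
      rw [hmv, hN, hdeg]; simp
    rw [this]
    refine le_trans (by simp [hdeg]) (Finset.le_sup' _ (Finset.mem_univ v))
  · have hsv : s v = (G.degree v : ℝ) := by simp [hs, hdeg]
    have hNsum : ∑ u ∈ G.neighborFinset v, s u = ∑ u ∈ G.neighborFinset v, (G.degree u : ℝ) := by
      refine Finset.sum_congr rfl fun u hu => ?_
      have : G.degree u ≠ 0 := by
        rw [SimpleGraph.mem_neighborFinset] at hu
        have : v ∈ G.neighborFinset u := by
          rw [SimpleGraph.mem_neighborFinset]; exact hu.symm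
        intro h0
        rw [← SimpleGraph.card_neighborFinset_eq_degree, Finset.card_eq_zero] at h0
        simp [h0] at this
      simp [hs, this]
    have hdpos : (0 : ℝ) < (G.degree v : ℝ) := by
      exact_mod_cast Nat.pos_of_ne_zero hdeg
    have hval : (signlessLap G *ᵥ s) v / s v =
        (G.degree v : ℝ) + (∑ u ∈ G.neighborFinset v, (G.degree u : ℝ)) / G.degree v := by
      rw [hmv, hsv, hNsum, add_div, mul_div_assoc, div_self hdpos.ne', mul_one]
    rw [hval]
    refine le_trans (le_of_eq ?_) (Finset.le_sup' _ (Finset.mem_univ v))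
    simp [hdeg]
end

section
/- Let G be a graph with a vertex partition {V_1,...,V_m} such that each submatrix Q_{ij} of Q(G) (rows indexed by V_i, columns by V_j) has each row sum at most r_{ij} with all r_{ij} ≥ 0. Then q_1(G) ≤ λ_max(R), where R = (r_{ij}). -/
open Matrix Polynomial Finset

section Aux

open Filter

lemma PFaux.spec_iff_det {n : ℕ} (S : Matrix (Fin n) (Fin n) ℝ) (t : ℝ) :
    t ∈ spectrum ℝ S ↔ (t • (1:Matrix (Fin n) (Fin n) ℝ) - S).det = 0 := by
  rw [spectrum.mem_iff, Algebra.algebraMap_eq_smul_one,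
    Matrix.isUnit_iff_isUnit_det, isUnit_iff_ne_zero, not_ne_iff]

lemma PFaux.pow_entry_nonneg {n : ℕ} {R : Matrix (Fin n) (Fin n) ℝ} (hR : ∀ i j, 0 ≤ R i j) :
    ∀ N i j, 0 ≤ (R ^ N) i j := by
  intro N
  induction N with
  | zero => intro i j; rw [pow_zero]; by_cases h : i = j <;> simp [Matrix.one_apply, h]
  | succ N ih =>
    intro i j
    rw [pow_succ, Matrix.mul_apply]
    exact Finset.sum_nonneg fun k _ => mul_nonneg (ih i k) (hR k j)

lemma PFaux.pow_entry_le {n : ℕ} {R : Matrix (Fin n) (Fin n) ℝ} (hR : ∀ i j, 0 ≤ R i j)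
    {C : ℝ} (hC : ∀ i, ∑ j, R i j ≤ C) (hC0 : 0 ≤ C) :
    ∀ N i j, (R ^ N) i j ≤ C ^ N := by
  intro N
  induction N with
  | zero => intro i j; rw [pow_zero, pow_zero]; by_cases h : i = j <;> simp [Matrix.one_apply, h]
  | succ N ih =>
    intro i j
    rw [pow_succ', Matrix.mul_apply, pow_succ']
    calc ∑ k, R i k * (R ^ N) k j ≤ ∑ k, R i k * C ^ N := by
          exact Finset.sum_le_sum fun k _ => mul_le_mul_of_nonneg_left (ih k j) (hR i k)
      _ = (∑ k, R i k) * C ^ N := by rw [← Finset.sum_mul]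
      _ ≤ C * C ^ N := mul_le_mul_of_nonneg_right (hC i) (pow_nonneg hC0 N)

lemma PFaux.neumann_id {n : ℕ} (R : Matrix (Fin n) (Fin n) ℝ) {t : ℝ} (ht : t ≠ 0) :
    ∀ N, (t • (1:Matrix (Fin n) (Fin n) ℝ) - R) * (∑ k ∈ range N, (t⁻¹)^(k+1) • R^k)
      = 1 - (t⁻¹)^N • R^N := by
  intro N
  induction N with
  | zero => simp
  | succ N ih =>
    rw [Finset.sum_range_succ, Matrix.mul_add, ih]
    have : (t • (1:Matrix (Fin n) (Fin n) ℝ) - R) * ((t⁻¹)^(N+1) • R^N)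
        = (t⁻¹)^N • R^N - (t⁻¹)^(N+1) • R^(N+1) := by
      have e1 : t⁻¹^(N+1) * t = t⁻¹^N := by
        rw [pow_succ, mul_assoc, inv_mul_cancel₀ ht, mul_one]
      rw [Matrix.mul_smul, Matrix.sub_mul, Matrix.smul_mul, Matrix.one_mul, smul_sub,
        smul_smul, e1, ← pow_succ']
    rw [this]
    abel

lemma PFaux.inv_nonneg_large {n : ℕ} (R : Matrix (Fin n) (Fin n) ℝ) (hR : ∀ i j, 0 ≤ R i j)
    {C t : ℝ} (hC : ∀ i, ∑ j, R i j ≤ C) (hC0 : 0 ≤ C) (ht : C < t)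
    (hu : IsUnit (t • (1:Matrix (Fin n) (Fin n) ℝ) - R).det) :
    ∀ i j, 0 ≤ (t • (1:Matrix (Fin n) (Fin n) ℝ) - R)⁻¹ i j := by
  intro i j
  set A := t • (1:Matrix (Fin n) (Fin n) ℝ) - R with hA
  set B := A⁻¹ with hB
  have ht0 : 0 < t := lt_of_le_of_lt hC0 ht
  have htinv : 0 < t⁻¹ := inv_pos.mpr ht0
  have hBl : B * A = 1 := Matrix.nonsing_inv_mul _ hu
  have key : ∀ N : ℕ, B = (∑ k ∈ range N, (t⁻¹)^(k+1) • R^k) + (t⁻¹)^N • (B * R^N) := by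
    intro N
    have h1 := PFaux.neumann_id R (ne_of_gt ht0) N
    have h2 : B * (A * (∑ k ∈ range N, (t⁻¹)^(k+1) • R^k)) = B * (1 - (t⁻¹)^N • R^N) := by
      rw [h1]
    rw [← Matrix.mul_assoc, hBl, Matrix.one_mul, Matrix.mul_sub, Matrix.mul_one,
      Matrix.mul_smul] at h2
    rw [h2]
    abel
  set D : ℝ := ∑ k, |B i k| with hD
  have hDpos : 0 ≤ D := Finset.sum_nonneg fun k _ => abs_nonneg _
  have hbound : ∀ N : ℕ, -(D * (C * t⁻¹)^N) ≤ B i j := by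
    intro N
    have h1 := key N
    have hsum : 0 ≤ (∑ k ∈ range N, (t⁻¹)^(k+1) • R^k) i j := by
      rw [Matrix.sum_apply]
      apply Finset.sum_nonneg
      intro k _
      rw [Matrix.smul_apply, smul_eq_mul]
      exact mul_nonneg (pow_nonneg (le_of_lt htinv) _) (PFaux.pow_entry_nonneg hR k i j)
    have hrem : -(D * C^N) ≤ (B * R^N) i j := by
      rw [Matrix.mul_apply, hD, Finset.sum_mul, ← Finset.sum_neg_distrib]
      apply Finset.sum_le_sum
      intro k _
      have h2 : (R^N) k j ≤ C^N := PFaux.pow_entry_le hR hC hC0 N k j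
      have h3 : 0 ≤ (R^N) k j := PFaux.pow_entry_nonneg hR N k j
      calc -(|B i k| * C^N) ≤ -(|B i k| * (R^N) k j) := by
            apply neg_le_neg
            exact mul_le_mul_of_nonneg_left h2 (abs_nonneg _)
        _ ≤ B i k * (R^N) k j := by
            rw [← neg_mul]
            exact mul_le_mul_of_nonneg_right (neg_abs_le _) h3
    have : B i j = (∑ k ∈ range N, (t⁻¹)^(k+1) • R^k) i j + (t⁻¹)^N * (B * R^N) i j := by
      nth_rewrite 1 [h1]
      rw [Matrix.add_apply, Matrix.smul_apply, smul_eq_mul]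
    rw [this]
    have h4 : (t⁻¹)^N * (-(D * C^N)) ≤ (t⁻¹)^N * (B * R^N) i j :=
      mul_le_mul_of_nonneg_left hrem (pow_nonneg (le_of_lt htinv) N)
    calc -(D * (C * t⁻¹)^N) = (t⁻¹)^N * (-(D * C^N)) := by rw [mul_pow]; ring
      _ ≤ 0 + (t⁻¹)^N * (B * R^N) i j := by rw [zero_add]; exact h4
      _ ≤ _ := add_le_add_left hsum _
  have hr1 : 0 ≤ C * t⁻¹ := mul_nonneg hC0 (le_of_lt htinv)
  have hr2 : C * t⁻¹ < 1 := by
    rw [mul_inv_lt_iff₀ ht0, one_mul]; exact ht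
  have hlim : Tendsto (fun N : ℕ => -(D * (C * t⁻¹)^N)) atTop (nhds 0) := by
    have := (tendsto_pow_atTop_nhds_zero_of_lt_one hr1 hr2).const_mul D
    simpa using this.neg
  exact le_of_tendsto hlim (Filter.Eventually.of_forall hbound)

lemma PFaux.inv_pos_of_nonneg {n : ℕ} (R : Matrix (Fin n) (Fin n) ℝ) (hpos : ∀ i j, 0 < R i j)
    {t : ℝ} (ht : 0 < t) (hu : IsUnit (t • (1:Matrix (Fin n) (Fin n) ℝ) - R).det)
    (hnn : ∀ i j, 0 ≤ (t • (1:Matrix (Fin n) (Fin n) ℝ) - R)⁻¹ i j) :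
    ∀ i j, 0 < (t • (1:Matrix (Fin n) (Fin n) ℝ) - R)⁻¹ i j := by
  intro i j
  set A := t • (1:Matrix (Fin n) (Fin n) ℝ) - R with hA
  set B := A⁻¹ with hB
  have hBl : B * A = 1 := Matrix.nonsing_inv_mul _ hu
  have hrow : ∃ j₀, 0 < B i j₀ := by
    by_contra h
    push_neg at h
    have hz : ∀ k, B i k = 0 := fun k => le_antisymm (h k) (hnn i k)
    have : (B * A) i i = 0 := by
      rw [Matrix.mul_apply]
      apply Finset.sum_eq_zero
      intro k _
      rw [hz k, zero_mul]
    rw [hBl, Matrix.one_apply_eq] at this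
    exact one_ne_zero this
  obtain ⟨j₀, hj₀⟩ := hrow
  have key : B = t⁻¹ • ((1:Matrix (Fin n) (Fin n) ℝ) + B * R) := by
    have h1 : B * (t • (1:Matrix (Fin n) (Fin n) ℝ)) = 1 + B * R := by
      have : B * (t • 1 - R) + B * R = 1 + B * R := by rw [hBl]
      rw [Matrix.mul_sub] at this
      rw [← this]
      abel
    have h2 : B * (t • (1:Matrix (Fin n) (Fin n) ℝ)) = t • B := by
      rw [Matrix.mul_smul, Matrix.mul_one]
    rw [h2] at h1
    rw [← h1, smul_smul, inv_mul_cancel₀ (ne_of_gt ht), one_smul]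
  have hBR : 0 < (B * R) i j := by
    rw [Matrix.mul_apply]
    have : ∀ k ∈ Finset.univ, 0 ≤ B i k * R k j :=
      fun k _ => mul_nonneg (hnn i k) (le_of_lt (hpos k j))
    calc (0:ℝ) < B i j₀ * R j₀ j := mul_pos hj₀ (hpos j₀ j)
      _ ≤ ∑ k, B i k * R k j := Finset.single_le_sum this (Finset.mem_univ j₀)
  have h3 : 0 ≤ (1:Matrix (Fin n) (Fin n) ℝ) i j := by
    by_cases h : i = j <;> simp [Matrix.one_apply, h]
  calc (0:ℝ) < t⁻¹ * ((1:Matrix (Fin n) (Fin n) ℝ) i j + (B * R) i j) := by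
        apply mul_pos (inv_pos.mpr ht)
        linarith
    _ = B i j := by
        conv_rhs => rw [key]
        rw [Matrix.smul_apply, Matrix.add_apply, smul_eq_mul]

lemma PFaux.core_pos {n : ℕ} (R : Matrix (Fin n) (Fin n) ℝ) (hpos : ∀ i j, 0 < R i j)
    (y : Fin n → ℝ) (hy0 : ∀ i, 0 ≤ y i) (hyne : y ≠ 0) {t₀ : ℝ} (ht₀ : 0 < t₀)
    (hineq : ∀ i, t₀ * y i ≤ (R *ᵥ y) i) :
    ∃ lam ∈ spectrum ℝ R, t₀ ≤ lam := by
  by_contra hcon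
  push_neg at hcon
  have hdet : ∀ t, t₀ ≤ t → (t • (1:Matrix (Fin n) (Fin n) ℝ) - R).det ≠ 0 := by
    intro t ht hd
    exact absurd (hcon t ((PFaux.spec_iff_det R t).mpr hd)) (not_lt.mpr ht)
  have hunit : ∀ t, t₀ ≤ t → IsUnit (t • (1:Matrix (Fin n) (Fin n) ℝ) - R).det :=
    fun t ht => isUnit_iff_ne_zero.mpr (hdet t ht)
  set M : ℝ → Matrix (Fin n) (Fin n) ℝ := fun t => (t • 1 - R)⁻¹ with hM
  have hAc : Continuous (fun t : ℝ => t • (1:Matrix (Fin n) (Fin n) ℝ) - R) :=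
    (continuous_id.smul continuous_const).sub continuous_const
  have hcont : ∀ i j, Continuous (fun x : Set.Ici t₀ => M x.1 i j) := by
    intro i j
    have h1 : (fun x : Set.Ici t₀ => M x.1 i j)
        = fun x : Set.Ici t₀ => ((x.1 • (1:Matrix (Fin n) (Fin n) ℝ) - R).det)⁻¹ *
            (x.1 • (1:Matrix (Fin n) (Fin n) ℝ) - R).adjugate i j := by
      funext x
      show ((x.1:ℝ) • (1:Matrix (Fin n) (Fin n) ℝ) - R)⁻¹ i j = _
      rw [Matrix.inv_def, Ring.inverse_eq_inv, Matrix.smul_apply, smul_eq_mul]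
    rw [h1]
    apply Continuous.mul
    · apply Continuous.inv₀
      · exact hAc.matrix_det.comp continuous_subtype_val
      · intro x
        exact hdet x.1 x.2
    · have := hAc.matrix_adjugate.comp (continuous_subtype_val (p := fun t => t ∈ Set.Ici t₀))
      exact ((continuous_apply j).comp ((continuous_apply i).comp this))
  haveI : PreconnectedSpace (Set.Ici t₀) := Subtype.preconnectedSpace isPreconnected_Ici
  set S : Set (Set.Ici t₀) := {x | ∀ i j, 0 ≤ M x.1 i j} with hS
  have hSclosed : IsClosed S := by
    have : S = ⋂ i, ⋂ j, (fun x : Set.Ici t₀ => M x.1 i j) ⁻¹' Set.Ici 0 := by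
      ext x; simp [hS, Set.mem_iInter]
    rw [this]
    exact isClosed_iInter fun i => isClosed_iInter fun j =>
      IsClosed.preimage (hcont i j) isClosed_Ici
  have hSopen : IsOpen S := by
    rw [isOpen_iff_mem_nhds]
    intro x hx
    set U : Set (Set.Ici t₀) := ⋂ i, ⋂ j, (fun x : Set.Ici t₀ => M x.1 i j) ⁻¹' Set.Ioi 0 with hU
    have hUopen : IsOpen U :=
      isOpen_iInter_of_finite fun i => isOpen_iInter_of_finite fun j =>
        IsOpen.preimage (hcont i j) isOpen_Ioi
    have hxU : x ∈ U := by
      have := PFaux.inv_pos_of_nonneg R hpos (lt_of_lt_of_le ht₀ x.2) (hunit x.1 x.2) hx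
      simp only [hU, Set.mem_iInter, Set.mem_preimage, Set.mem_Ioi]
      exact fun i j => this i j
    have hUS : U ⊆ S := by
      intro z hz i j
      simp only [hU, Set.mem_iInter, Set.mem_preimage, Set.mem_Ioi] at hz
      exact le_of_lt (hz i j)
    exact Filter.mem_of_superset (hUopen.mem_nhds hxU) hUS
  set C : ℝ := ∑ i, ∑ j, R i j with hC
  have hC0 : 0 ≤ C := Finset.sum_nonneg fun i _ => Finset.sum_nonneg fun j _ => le_of_lt (hpos i j)
  have hCrow : ∀ i, ∑ j, R i j ≤ C := by
    intro i
    apply Finset.single_le_sum (f := fun i => ∑ j, R i j)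
      (fun k _ => Finset.sum_nonneg fun j _ => le_of_lt (hpos k j)) (Finset.mem_univ i)
  set tb : ℝ := t₀ + C + 1 with htb
  have htb1 : t₀ ≤ tb := by rw [htb]; linarith
  have htb2 : C < tb := by rw [htb]; linarith
  have hSne : S.Nonempty := by
    refine ⟨⟨tb, htb1⟩, ?_⟩
    intro i j
    exact PFaux.inv_nonneg_large R (fun i j => le_of_lt (hpos i j)) hCrow hC0 htb2
      (hunit tb htb1) i j
  have hSuniv : S = Set.univ := IsClopen.eq_univ ⟨hSclosed, hSopen⟩ hSne
  have hMnn : ∀ i j, 0 ≤ M t₀ i j := by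
    have : (⟨t₀, le_refl t₀⟩ : Set.Ici t₀) ∈ S := by rw [hSuniv]; trivial
    exact this
  have hBl : M t₀ * (t₀ • (1:Matrix (Fin n) (Fin n) ℝ) - R) = 1 :=
    Matrix.nonsing_inv_mul _ (hunit t₀ (le_refl t₀))
  set z : Fin n → ℝ := (t₀ • (1:Matrix (Fin n) (Fin n) ℝ) - R) *ᵥ y with hz
  have hznp : ∀ i, z i ≤ 0 := by
    intro i
    rw [hz, Matrix.sub_mulVec, Matrix.smul_mulVec, Matrix.one_mulVec]
    simp only [Pi.sub_apply, Pi.smul_apply, smul_eq_mul]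
    linarith [hineq i]
  have hyz : y = M t₀ *ᵥ z := by
    rw [hz, Matrix.mulVec_mulVec, hBl, Matrix.one_mulVec]
  have hy0' : ∀ i, y i ≤ 0 := by
    intro i
    rw [hyz, Matrix.mulVec, dotProduct]
    apply Finset.sum_nonpos
    intro k _
    exact mul_nonpos_of_nonneg_of_nonpos (hMnn i k) (hznp k)
  apply hyne
  funext i
  exact le_antisymm (hy0' i) (hy0 i)

lemma PFaux.spec_abs_le {n : ℕ} (S : Matrix (Fin n) (Fin n) ℝ) {D : ℝ}
    (hD : ∀ i, ∑ j, |S i j| ≤ D) {t : ℝ} (ht : t ∈ spectrum ℝ S) : |t| ≤ D := by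
  rw [PFaux.spec_iff_det] at ht
  obtain ⟨v, hv, hveq⟩ := (Matrix.exists_mulVec_eq_zero_iff).mpr ht
  obtain ⟨i, _, hi⟩ := Finset.exists_max_image Finset.univ (fun i => |v i|)
    ⟨(Function.ne_iff.mp hv).choose, Finset.mem_univ _⟩
  have hvi : 0 < |v i| := by
    obtain ⟨k, hk⟩ := Function.ne_iff.mp hv
    exact lt_of_lt_of_le (abs_pos.mpr hk) (hi k (Finset.mem_univ k))
  have heig : t * v i = ∑ j, S i j * v j := by
    have := congrFun hveq i
    rw [Matrix.sub_mulVec, Matrix.smul_mulVec, Matrix.one_mulVec] at this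
    simp only [Pi.sub_apply, Pi.smul_apply, smul_eq_mul, Pi.zero_apply] at this
    rw [Matrix.mulVec, dotProduct] at this
    linarith
  have : |t| * |v i| ≤ D * |v i| := by
    calc |t| * |v i| = |t * v i| := (abs_mul t (v i)).symm
      _ = |∑ j, S i j * v j| := by rw [heig]
      _ ≤ ∑ j, |S i j * v j| := Finset.abs_sum_le_sum_abs _ _
      _ ≤ ∑ j, |S i j| * |v i| := by
          apply Finset.sum_le_sum
          intro j _
          rw [abs_mul]
          exact mul_le_mul_of_nonneg_left (hi j (Finset.mem_univ j)) (abs_nonneg _)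
      _ = (∑ j, |S i j|) * |v i| := by rw [← Finset.sum_mul]
      _ ≤ D * |v i| := mul_le_mul_of_nonneg_right (hD i) (abs_nonneg _)
  exact le_of_mul_le_mul_right this hvi

lemma PFaux.core_nonneg {n : ℕ} (R : Matrix (Fin n) (Fin n) ℝ) (hR : ∀ i j, 0 ≤ R i j)
    (y : Fin n → ℝ) (hy0 : ∀ i, 0 ≤ y i) (hyne : y ≠ 0) {t₀ : ℝ} (ht₀ : 0 < t₀)
    (hineq : ∀ i, t₀ * y i ≤ (R *ᵥ y) i) :
    ∃ lam ∈ spectrum ℝ R, t₀ ≤ lam := by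
  classical
  set J : Matrix (Fin n) (Fin n) ℝ := Matrix.of (fun _ _ => (1:ℝ)) with hJ
  set Rf : ℕ → Matrix (Fin n) (Fin n) ℝ := fun N => R + (1/((N:ℝ)+1)) • J with hRf
  have hεpos : ∀ N : ℕ, (0:ℝ) < 1/((N:ℝ)+1) := fun N => by positivity
  have hRfpos : ∀ N i j, 0 < Rf N i j := by
    intro N i j
    simp only [hRf, Matrix.add_apply, Matrix.smul_apply, hJ, Matrix.of_apply, smul_eq_mul, mul_one]
    have := hR i j; have := hεpos N; linarith
  have hRfineq : ∀ N i, t₀ * y i ≤ (Rf N *ᵥ y) i := by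
    intro N i
    rw [hRf, Matrix.add_mulVec]
    simp only [Pi.add_apply]
    have h2 : 0 ≤ (((1/((N:ℝ)+1)) • J) *ᵥ y) i := by
      rw [Matrix.smul_mulVec]
      simp only [Pi.smul_apply, smul_eq_mul]
      apply mul_nonneg (le_of_lt (hεpos N))
      rw [Matrix.mulVec, dotProduct]
      exact Finset.sum_nonneg fun k _ => by
        simp only [hJ, Matrix.of_apply, one_mul]; exact hy0 k
    linarith [hineq i]
  have hlam : ∀ N : ℕ, ∃ lam ∈ spectrum ℝ (Rf N), t₀ ≤ lam :=
    fun N => PFaux.core_pos (Rf N) (hRfpos N) y hy0 hyne ht₀ (hRfineq N)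
  choose lam hlamspec hlamge using hlam
  set D : ℝ := (∑ i, ∑ j, R i j) + n with hD
  have hlamD : ∀ N, lam N ∈ Set.Icc t₀ D := by
    intro N
    refine ⟨hlamge N, ?_⟩
    have habs : |lam N| ≤ D := by
      apply PFaux.spec_abs_le (Rf N) (D := D) _ (hlamspec N)
      intro i
      have : ∀ j, |Rf N i j| = Rf N i j := fun j => abs_of_pos (hRfpos N i j)
      rw [Finset.sum_congr rfl fun j _ => this j]
      have h1 : ∀ j, Rf N i j ≤ R i j + 1 := by
        intro j
        simp only [hRf, Matrix.add_apply, Matrix.smul_apply, hJ, Matrix.of_apply,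
          smul_eq_mul, mul_one]
        have h3 : 1/((N:ℝ)+1) ≤ 1 := by
          rw [div_le_one (by positivity)]; linarith [Nat.cast_nonneg (α := ℝ) N]
        linarith
      calc ∑ j, Rf N i j ≤ ∑ j, (R i j + 1) := Finset.sum_le_sum fun j _ => h1 j
        _ = (∑ j, R i j) + n := by rw [Finset.sum_add_distrib]; simp
        _ ≤ D := by
          rw [hD]
          have : ∑ j, R i j ≤ ∑ i, ∑ j, R i j :=
            Finset.single_le_sum (f := fun i => ∑ j, R i j)
              (fun k _ => Finset.sum_nonneg fun j _ => hR k j) (Finset.mem_univ i)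
          linarith
    exact le_trans (le_abs_self _) habs
  obtain ⟨a, haIcc, φ, hφmono, hφlim⟩ := (isCompact_Icc (a := t₀) (b := D)).tendsto_subseq hlamD
  refine ⟨a, ?_, haIcc.1⟩
  rw [PFaux.spec_iff_det]
  have hF : Continuous (fun p : ℝ × ℝ =>
      (p.1 • (1:Matrix (Fin n) (Fin n) ℝ) - R - p.2 • J).det) := by
    apply Continuous.matrix_det
    exact ((continuous_fst.smul continuous_const).sub continuous_const).sub
      (continuous_snd.smul continuous_const)
  have hdetz : ∀ N,
      (lam (φ N) • (1:Matrix (Fin n) (Fin n) ℝ) - R - (1/((φ N:ℝ)+1)) • J).det = 0 := by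
    intro N
    have := (PFaux.spec_iff_det (Rf (φ N)) (lam (φ N))).mp (hlamspec (φ N))
    rw [hRf] at this
    rw [← this]
    congr 1
    rw [sub_sub]
  have hplim : Filter.Tendsto (fun N => (lam (φ N), 1/((φ N:ℝ)+1))) Filter.atTop
      (nhds (a, 0)) := by
    exact Filter.Tendsto.prodMk_nhds hφlim
      (tendsto_one_div_add_atTop_nhds_zero_nat.comp hφmono.tendsto_atTop)
  have hflim := (hF.tendsto (a, 0)).comp hplim
  have : Filter.Tendsto (fun N => (lam (φ N) • (1:Matrix (Fin n) (Fin n) ℝ) - R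
      - (1/((φ N:ℝ)+1)) • J).det) Filter.atTop
      (nhds ((a • (1:Matrix (Fin n) (Fin n) ℝ) - R - (0:ℝ) • J).det)) := hflim
  rw [zero_smul, sub_zero] at this
  have h0 : Filter.Tendsto (fun _ : ℕ => (0:ℝ)) Filter.atTop (nhds 0) := tendsto_const_nhds
  have := tendsto_nhds_unique (by simpa only [hdetz] using this : Filter.Tendsto
    (fun _ : ℕ => (0:ℝ)) Filter.atTop (nhds ((a • (1:Matrix (Fin n) (Fin n) ℝ) - R).det))) h0
  exact this.symm ▸ this

lemma PFaux.spec_shift {n : ℕ} (R : Matrix (Fin n) (Fin n) ℝ) (c lam : ℝ)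
    (h : lam ∈ spectrum ℝ (R + c • (1:Matrix (Fin n) (Fin n) ℝ))) :
    lam - c ∈ spectrum ℝ R := by
  rw [PFaux.spec_iff_det] at h ⊢
  rw [← h]
  congr 1
  rw [sub_smul]
  abel

end Aux

theorem stmt9 {V : Type*} [Fintype V] [DecidableEq V] (G : SimpleGraph V) (m : ℕ)
    (Vs : Fin m → Finset V) (hpart : ∀ v : V, ∃! i, v ∈ Vs i) (hne : ∀ i, (Vs i).Nonempty)
    (R : Matrix (Fin m) (Fin m) ℝ) (hR : ∀ i j, 0 ≤ R i j)
    (hrow : ∀ i j, ∀ v ∈ Vs i, ∑ u ∈ Vs j, signlessLap G v u ≤ R i j) :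
    eig (signlessLap G) 1 ≤ sSup (spectrum ℝ R) := by
  classical
  rcases isEmpty_or_nonempty V with hV | hV
  · -- empty vertex type : both sides are 0
    have hm : m = 0 := by
      by_contra h
      obtain ⟨v, _⟩ := hne ⟨0, Nat.pos_of_ne_zero h⟩
      exact hV.elim v
    have h1 : eig (signlessLap G) 1 = 0 := by
      rw [eig]
      split
      · rename_i h
        have hz : (Finset.univ.val.map h.eigenvalues) = 0 := by simp
        rw [hz]
        have hs : (0 : Multiset ℝ).sort (· ≥ ·) = [] := by
          apply List.length_eq_zero_iff.mp
          rw [Multiset.length_sort]; rfl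
        rw [hs]; rfl
      · rfl
    have h2 : spectrum ℝ R = ∅ := by
      subst hm
      haveI : Subsingleton (Matrix (Fin 0) (Fin 0) ℝ) :=
        ⟨fun a b => by ext i; exact i.elim0⟩
      ext t
      simp only [Set.mem_empty_iff_false, iff_false, spectrum.mem_iff, not_not]
      exact isUnit_of_subsingleton _
    rw [h1, h2, Real.sSup_empty]
  · -- main case
    set Q := signlessLap G with hQdef
    have hQsymm : Q.IsHermitian := by
      rw [Matrix.IsHermitian]
      ext i j
      rw [Matrix.conjTranspose_apply, star_trivial]
      show Q j i = Q i j
      simp only [hQdef, signlessLap, Matrix.add_apply, SimpleGraph.degMatrix,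
        Matrix.diagonal_apply, SimpleGraph.adjMatrix_apply]
      by_cases h : i = j
      · subst h; simp
      · simp only [h, Ne.symm h, if_false, zero_add]
        rw [SimpleGraph.adj_comm]
    have hQnn : ∀ v u, 0 ≤ Q v u := by
      intro v u
      simp only [hQdef, signlessLap, Matrix.add_apply, SimpleGraph.degMatrix,
        Matrix.diagonal_apply, SimpleGraph.adjMatrix_apply]
      by_cases h : v = u
      · subst h; simp
      · simp only [h, if_false, zero_add]
        positivity
    -- q is an eigenvalue of Q
    set q : ℝ := eig Q 1 with hq
    have hex : ∃ i : V, hQsymm.eigenvalues i = q := by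
      rw [hq, eig, dif_pos hQsymm]
      set L := (Finset.univ.val.map hQsymm.eigenvalues).sort (· ≥ ·) with hL
      have hlen : L.length = Fintype.card V := by
        rw [hL, Multiset.length_sort, Multiset.card_map]; rfl
      have hpos : 0 < L.length := by rw [hlen]; exact Fintype.card_pos
      have hget : L.getD (1-1) 0 = L.get ⟨0, hpos⟩ := List.getD_eq_getElem L 0 hpos
      rw [hget]
      have hmem : L.get ⟨0, hpos⟩ ∈ L := L.get_mem _
      have hmem2 := (Multiset.mem_sort _).mp hmem
      rw [Multiset.mem_map] at hmem2
      obtain ⟨i, _, hi⟩ := hmem2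
      exact ⟨i, hi⟩
    obtain ⟨i₀, hi₀⟩ := hex
    set x : V → ℝ := ⇑(hQsymm.eigenvectorBasis i₀) with hx
    have hxeig : Q *ᵥ x = q • x := by
      rw [hx, hQsymm.mulVec_eigenvectorBasis i₀, hi₀]
    have hxne : x ≠ 0 := by
      intro h
      have hb := hQsymm.eigenvectorBasis.toBasis.ne_zero i₀
      rw [OrthonormalBasis.coe_toBasis] at hb
      apply hb
      ext v
      exact congrFun h v
    -- block structure
    choose f hf hfu using hpart
    have hfiber : ∀ j, Finset.univ.filter (fun v => f v = j) = Vs j := by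
      intro j
      ext v
      simp only [Finset.mem_filter, Finset.mem_univ, true_and]
      constructor
      · rintro rfl; exact hf v
      · intro hv; exact (hfu v j hv).symm
    set y : Fin m → ℝ := fun j => (Vs j).sup' (hne j) (fun u => |x u|) with hy
    have hyub : ∀ j, ∀ u ∈ Vs j, |x u| ≤ y j := by
      intro j u hu
      rw [hy]
      exact Finset.le_sup' (fun u => |x u|) hu
    have hy0 : ∀ j, 0 ≤ y j := by
      intro j
      obtain ⟨u, hu⟩ := hne j
      exact le_trans (abs_nonneg (x u)) (hyub j u hu)
    have hyne : y ≠ 0 := by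
      obtain ⟨u, hu⟩ := Function.ne_iff.mp hxne
      intro h0
      have h1 : y (f u) = 0 := congrFun h0 (f u)
      have h2 := hyub (f u) u (hf u)
      rw [h1] at h2
      exact hu (abs_nonpos_iff.mp h2)
    -- key inequality
    have hkey : ∀ i, q * y i ≤ (R *ᵥ y) i := by
      intro i
      obtain ⟨v, hv, hveq⟩ := Finset.exists_mem_eq_sup' (hne i) (fun u => |x u|)
      have hyi : y i = |x v| := hveq
      calc q * y i ≤ |q| * y i := mul_le_mul_of_nonneg_right (le_abs_self q) (hy0 i)
        _ = |q * x v| := by rw [hyi, abs_mul]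
        _ = |(Q *ᵥ x) v| := by rw [hxeig]; simp only [Pi.smul_apply, smul_eq_mul]
        _ = |∑ u, Q v u * x u| := by rw [Matrix.mulVec, dotProduct]
        _ ≤ ∑ u, |Q v u * x u| := Finset.abs_sum_le_sum_abs _ _
        _ = ∑ u, Q v u * |x u| := by
            apply Finset.sum_congr rfl
            intro u _
            rw [abs_mul, abs_of_nonneg (hQnn v u)]
        _ = ∑ j, ∑ u ∈ Finset.univ.filter (fun u => f u = j), Q v u * |x u| :=
            (Finset.sum_fiberwise Finset.univ f _).symm
        _ = ∑ j, ∑ u ∈ Vs j, Q v u * |x u| := by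
            apply Finset.sum_congr rfl
            intro j _
            rw [hfiber j]
        _ ≤ ∑ j, ∑ u ∈ Vs j, Q v u * y j := by
            apply Finset.sum_le_sum
            intro j _
            apply Finset.sum_le_sum
            intro u hu
            exact mul_le_mul_of_nonneg_left (hyub j u hu) (hQnn v u)
        _ = ∑ j, (∑ u ∈ Vs j, Q v u) * y j := by
            apply Finset.sum_congr rfl
            intro j _
            rw [Finset.sum_mul]
        _ ≤ ∑ j, R i j * y j := by
            apply Finset.sum_le_sum
            intro j _
            exact mul_le_mul_of_nonneg_right (hrow i j v hv) (hy0 j)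
        _ = (R *ᵥ y) i := by rw [Matrix.mulVec, dotProduct]
    -- shift to make the eigenvalue candidate positive
    set c : ℝ := |q| + 1 with hc
    have hc0 : 0 ≤ c := by rw [hc]; positivity
    have hqc : 0 < q + c := by
      rw [hc]
      have := neg_abs_le q
      linarith
    have hR' : ∀ i j, 0 ≤ (R + c • (1:Matrix (Fin m) (Fin m) ℝ)) i j := by
      intro i j
      rw [Matrix.add_apply, Matrix.smul_apply, smul_eq_mul]
      by_cases h : i = j
      · subst h; rw [Matrix.one_apply_eq]; have := hR i i; linarith
      · rw [Matrix.one_apply_ne h]; have := hR i j; linarith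
    have hineq' : ∀ i, (q + c) * y i ≤ ((R + c • (1:Matrix (Fin m) (Fin m) ℝ)) *ᵥ y) i := by
      intro i
      rw [Matrix.add_mulVec, Matrix.smul_mulVec, Matrix.one_mulVec]
      simp only [Pi.add_apply, Pi.smul_apply, smul_eq_mul]
      have := hkey i
      nlinarith [hy0 i, hkey i]
    obtain ⟨lam, hls, hlge⟩ :=
      PFaux.core_nonneg (R + c • (1:Matrix (Fin m) (Fin m) ℝ)) hR' y hy0 hyne hqc hineq'
    have hspec : lam - c ∈ spectrum ℝ R := PFaux.spec_shift R c lam hls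
    have hqle : q ≤ lam - c := by linarith
    -- sSup bound
    have hbdd : BddAbove (spectrum ℝ R) := by
      refine ⟨∑ i, ∑ j, |R i j|, ?_⟩
      intro t ht
      have habs : |t| ≤ ∑ i, ∑ j, |R i j| := by
        apply PFaux.spec_abs_le R _ ht
        intro i
        exact Finset.single_le_sum (f := fun i => ∑ j, |R i j|)
          (fun k _ => Finset.sum_nonneg fun j _ => abs_nonneg _) (Finset.mem_univ i)
      exact le_trans (le_abs_self t) habs
    exact le_trans hqle (le_csSup hbdd hspec)
end

section
/- Let G be a bipartite graph with n vertices, e edges, and bipartition (X,Y) with |X| ≤ |Y|. Then the largest Laplacian eigenvalue satisfies μ_1(G) ≤ |Y| + e/|Y|. -/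
open Matrix Polynomial Finset

lemma aux_rhs (b e a : ℝ) (hb : b ≠ 0) : (b + e / b) * (a * b) = a * b ^ 2 + a * e := by
  field_simp

theorem stmt11 (n : ℕ) (G : SimpleGraph (Fin n)) [DecidableRel G.Adj]
    (X Y : Finset (Fin n)) (hdisj : Disjoint X Y) (hcover : X ∪ Y = Finset.univ)
    (hbip : ∀ u v, G.Adj u v → ((u ∈ X ∧ v ∈ Y) ∨ (u ∈ Y ∧ v ∈ X)))
    (hXY : X.card ≤ Y.card) :
    eig (lap G) 1 ≤ (Y.card : ℝ) + (G.edgeFinset.card : ℝ) / Y.card := by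
  classical
  have hlap : lap G = G.lapMatrix ℝ := by unfold lap; congr!
  rcases Nat.eq_zero_or_pos n with h0 | hn
  · -- n = 0 : everything is trivial
    subst h0
    have hY : Y.card = 0 := by simp [Finset.eq_empty_of_isEmpty Y]
    have heig : eig (lap G) 1 = 0 := by
      unfold eig; split <;> simp
    rw [heig, hY]; simp
  -- main case n ≥ 1
  have hYcard : 1 ≤ Y.card := by
    by_contra h
    have hY0 : Y.card = 0 := by omega
    have hX0 : X.card = 0 := by omega
    have hcu := Finset.card_union_le X Y
    rw [hcover] at hcu
    simp only [Finset.card_univ, Fintype.card_fin] at hcu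
    omega
  set B : ℝ := (Y.card : ℝ) with hB
  have hB1 : (1 : ℝ) ≤ B := by rw [hB]; exact_mod_cast hYcard
  have hB0 : (0 : ℝ) < B := by linarith
  set E : ℝ := (G.edgeFinset.card : ℝ) with hE
  have hE0 : (0 : ℝ) ≤ E := by positivity
  -- basic bipartite facts
  have hsplit : ∀ u : Fin n, u ∈ X ∨ u ∈ Y := by
    intro u
    have : u ∈ X ∪ Y := by rw [hcover]; exact Finset.mem_univ u
    exact Finset.mem_union.mp this
  have hnotboth : ∀ u : Fin n, u ∈ X → u ∈ Y → False := fun u hx hy =>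
    Finset.disjoint_left.mp hdisj hx hy
  -- every degree is at most |Y|
  have hdegle : ∀ u : Fin n, G.degree u ≤ Y.card := by
    intro u
    rcases hsplit u with hu | hu
    · have hsub : G.neighborFinset u ⊆ Y := by
        intro w hw
        rw [SimpleGraph.mem_neighborFinset] at hw
        rcases hbip u w hw with ⟨_, h2⟩ | ⟨h1, _⟩
        · exact h2
        · exact absurd hu (fun hx => hnotboth u hx h1)
      exact Finset.card_le_card hsub
    · have hsub : G.neighborFinset u ⊆ X := by
        intro w hw
        rw [SimpleGraph.mem_neighborFinset] at hw
        rcases hbip u w hw with ⟨h1, _⟩ | ⟨_, h2⟩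
        · exact absurd h1 (fun hx => hnotboth u hx hu)
        · exact h2
      exact le_trans (Finset.card_le_card hsub) hXY
  -- the spectral part
  have hpsd : (lap G).PosSemidef := by
    rw [hlap]; exact SimpleGraph.posSemidef_lapMatrix ℝ G
  have hherm : (lap G).IsHermitian := hpsd.1
  obtain ⟨i, hi⟩ : ∃ i, eig (lap G) 1 = hherm.eigenvalues i := by
    unfold eig
    rw [dif_pos hherm]
    set l := ((Finset.univ.val.map hherm.eigenvalues).sort (· ≥ ·)) with hl
    have hlen : l.length = n := by simp [hl]
    have hlne : l ≠ [] := by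
      intro hc; rw [hc] at hlen; simp at hlen; omega
    have h0 : 0 < l.length := by rw [hlen]; omega
    have hmem : l.getD (1 - 1) 0 ∈ l := by
      simp only [Nat.sub_self]
      rw [List.getD_eq_getElem l 0 h0]
      exact List.getElem_mem h0
    have : l.getD (1 - 1) 0 ∈ (Finset.univ.val.map hherm.eigenvalues) := by
      rw [hl] at hmem
      exact (Multiset.mem_sort _).mp hmem
    obtain ⟨j, _, hj⟩ := Multiset.mem_map.mp this
    exact ⟨j, hj.symm⟩
  set μ : ℝ := eig (lap G) 1 with hμ
  have hμ0 : 0 ≤ μ := by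
    rw [hi]
    exact hpsd.eigenvalues_nonneg i
  rcases eq_or_lt_of_le hμ0 with hμz | hμpos
  · rw [← hμz]; positivity
  -- μ > 0 : get an eigenvector
  set x : Fin n → ℝ := ⇑(hherm.eigenvectorBasis i) with hxdef
  have hxeq : lap G *ᵥ x = μ • x := by
    rw [hi]; exact hherm.mulVec_eigenvectorBasis i
  have hxne : ∃ u, x u ≠ 0 := by
    have hnz := (hherm.eigenvectorBasis).orthonormal.ne_zero i
    by_contra hc
    push_neg at hc
    exact hnz (by ext j; exact hc j)
  have heqn : ∀ u : Fin n, μ * x u = (G.degree u : ℝ) * x u - ∑ w ∈ G.neighborFinset u, x w := by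
    intro u
    have := congrFun hxeq u
    rw [hlap, SimpleGraph.lapMatrix_mulVec_apply] at this
    simpa [Pi.smul_apply, smul_eq_mul] using this.symm
  -- isolated vertices carry zero weight
  have hiso : ∀ u : Fin n, G.degree u = 0 → x u = 0 := by
    intro u hu
    have h1 := heqn u
    have h2 : G.neighborFinset u = ∅ := Finset.card_eq_zero.mp hu
    rw [hu, h2] at h1
    simp at h1
    rcases h1 with h | h
    · exact absurd h (by linarith)
    · exact h
  set y : Fin n → ℝ := fun u => x u / (G.degree u : ℝ) with hy
  have hxy : ∀ u : Fin n, x u = (G.degree u : ℝ) * y u := by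
    intro u
    by_cases h : G.degree u = 0
    · simp [hy, h, hiso u h]
    · have : (G.degree u : ℝ) ≠ 0 := Nat.cast_ne_zero.mpr h
      show x u = (G.degree u : ℝ) * (x u / (G.degree u : ℝ))
      field_simp
  -- maximizing vertex
  have huniv : (Finset.univ : Finset (Fin n)).Nonempty := by
    rw [Finset.univ_nonempty_iff]
    exact Fin.pos_iff_nonempty.mp hn
  obtain ⟨v, -, hv⟩ := Finset.exists_max_image Finset.univ (fun u => |y u|) huniv
  have hvmax : ∀ u, |y u| ≤ |y v| := fun u => hv u (Finset.mem_univ u)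
  have hyv : 0 < |y v| := by
    obtain ⟨u, hu⟩ := hxne
    have hyu : y u ≠ 0 := by
      intro hc
      exact hu (by rw [hxy u, hc, mul_zero])
    exact lt_of_lt_of_le (abs_pos.mpr hyu) (hvmax u)
  have hdv : G.degree v ≠ 0 := by
    intro h
    rw [hy] at hyv
    simp [hiso v h] at hyv
  set a : ℝ := (G.degree v : ℝ) with ha
  have ha1 : (1 : ℝ) ≤ a := by rw [ha]; exact_mod_cast Nat.one_le_iff_ne_zero.mpr hdv
  have ha0 : (0 : ℝ) < a := by linarith
  set S : ℝ := ∑ w ∈ G.neighborFinset v, (G.degree w : ℝ) with hS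
  have hS0 : (0 : ℝ) ≤ S := by
    rw [hS]; exact Finset.sum_nonneg fun w _ => Nat.cast_nonneg _
  -- the key spectral inequality μ * a ≤ a^2 + S
  have hkey : μ * a ≤ a ^ 2 + S := by
    have h1 : μ * a * |y v| = |μ * x v| := by
      rw [hxy v, abs_mul, abs_mul, abs_of_nonneg hμ0, abs_of_pos ha0]
      ring
    have h2 : |μ * x v| ≤ (a ^ 2 + S) * |y v| := by
      rw [heqn v]
      calc |(G.degree v : ℝ) * x v - ∑ w ∈ G.neighborFinset v, x w|
          ≤ |(G.degree v : ℝ) * x v| + |∑ w ∈ G.neighborFinset v, x w| := abs_sub _ _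
        _ ≤ a * (a * |y v|) + ∑ w ∈ G.neighborFinset v, (G.degree w : ℝ) * |y v| := by
            gcongr
            · rw [hxy v, abs_mul, abs_mul, ← ha, abs_of_pos ha0]
            · calc |∑ w ∈ G.neighborFinset v, x w|
                  ≤ ∑ w ∈ G.neighborFinset v, |x w| := Finset.abs_sum_le_sum_abs _ _
                _ ≤ ∑ w ∈ G.neighborFinset v, (G.degree w : ℝ) * |y v| := by
                    apply Finset.sum_le_sum
                    intro w _
                    rw [hxy w, abs_mul, abs_of_nonneg (Nat.cast_nonneg _)]
                    exact mul_le_mul_of_nonneg_left (hvmax w) (Nat.cast_nonneg _)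
        _ = (a ^ 2 + S) * |y v| := by rw [← Finset.sum_mul, ← hS]; ring
    have := h1 ▸ h2
    exact le_of_mul_le_mul_right (by linarith) hyv
  -- combinatorial bounds: a ≤ B, S ≤ a * B, S ≤ E
  have haB : a ≤ B := by rw [ha, hB]; exact_mod_cast hdegle v
  have hSaB : S ≤ a * B := by
    rw [hS, ha]
    calc ∑ w ∈ G.neighborFinset v, (G.degree w : ℝ)
        ≤ ∑ _w ∈ G.neighborFinset v, (Y.card : ℝ) := by
          apply Finset.sum_le_sum
          intro w _
          exact_mod_cast hdegle w
      _ = (G.degree v : ℝ) * (Y.card : ℝ) := by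
          rw [Finset.sum_const, nsmul_eq_mul]
          rfl
  -- neighbors of v lie in a single class, hence are pairwise non-adjacent
  have hnoadj : ∀ u w, u ∈ G.neighborFinset v → w ∈ G.neighborFinset v → ¬ G.Adj u w := by
    intro u w hu hw hadj
    rw [SimpleGraph.mem_neighborFinset] at hu hw
    rcases hbip v u hu with ⟨hvX, huY⟩ | ⟨hvY, huX⟩
    · rcases hbip v w hw with ⟨-, hwY⟩ | ⟨hvY, -⟩
      · rcases hbip u w hadj with ⟨huX, -⟩ | ⟨-, hwX⟩
        · exact hnotboth u huX huY
        · exact hnotboth w hwX hwY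
      · exact hnotboth v hvX hvY
    · rcases hbip v w hw with ⟨hvX, -⟩ | ⟨-, hwX⟩
      · exact hnotboth v hvX hvY
      · rcases hbip u w hadj with ⟨-, hwY⟩ | ⟨huY, -⟩
        · exact hnotboth w hwX hwY
        · exact hnotboth u huX huY
  have hSE : S ≤ E := by
    rw [hS, hE]
    have hnat : ∑ w ∈ G.neighborFinset v, G.degree w ≤ G.edgeFinset.card := by
      have hcs : ∑ w ∈ G.neighborFinset v, G.degree w
          = ((G.neighborFinset v).sigma (fun w => G.neighborFinset w)).card := by
        rw [Finset.card_sigma]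
        rfl
      rw [hcs]
      apply Finset.card_le_card_of_injOn (fun p => s(p.1, p.2))
      · intro p hp
        rw [Finset.mem_coe, Finset.mem_sigma] at hp
        simp only [Finset.mem_coe, SimpleGraph.mem_edgeFinset, SimpleGraph.mem_edgeSet]
        exact (SimpleGraph.mem_neighborFinset _ _ _).mp hp.2
      · intro p hp q hq hpq
        rw [Finset.mem_coe, Finset.mem_sigma] at hp hq
        have hadjp : G.Adj p.1 p.2 := (SimpleGraph.mem_neighborFinset _ _ _).mp hp.2
        rcases Sym2.eq_iff.mp hpq with ⟨h1, h2⟩ | ⟨h1, h2⟩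
        · exact Sigma.ext h1 (heq_of_eq h2)
        · exfalso
          exact hnoadj p.1 q.1 hp.1 hq.1 (h2 ▸ hadjp)
    calc S = ((∑ w ∈ G.neighborFinset v, G.degree w : ℕ) : ℝ) := by
          rw [hS]; push_cast; rfl
      _ ≤ ((G.edgeFinset.card : ℕ) : ℝ) := by exact_mod_cast hnat
  -- finish with algebra
  have hfinal : μ * (a * B) ≤ (B + E / B) * (a * B) := by
    have hkeyB : μ * a * B ≤ (a ^ 2 + S) * B :=
      mul_le_mul_of_nonneg_right hkey (le_of_lt hB0)
    have hident : (a ^ 2 + S) * B ≤ a * B ^ 2 + a * E := by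
      nlinarith [mul_nonneg (sub_nonneg.mpr haB) (sub_nonneg.mpr hSaB),
        mul_nonneg (le_of_lt ha0) (sub_nonneg.mpr hSE)]
    have hrhs : (B + E / B) * (a * B) = a * B ^ 2 + a * E :=
      aux_rhs B E a (ne_of_gt hB0)
    rw [hrhs]
    calc μ * (a * B) = μ * a * B := by ring
      _ ≤ (a ^ 2 + S) * B := hkeyB
      _ ≤ a * B ^ 2 + a * E := hident
  exact le_of_mul_le_mul_right hfinal (mul_pos ha0 hB0)
end
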